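/- orElse is idempotent up to weak atomic equivalence: M orElse M ≈ M. -/

import Mathlib

/-- Actions: reads and writes of names. -/
inductive Act (N : Type*) where
  | rd (a : N)
  | wt (a : N)

/-- Multiset of names written in a log. -/
def Wl {N : Type*} : List (Act N) → Multiset N
  | [] => 0
  | .wt a :: δ => Wl δ + {a}
  | .rd _ :: δ => Wl δ

/-- Multiset of names read in a log. -/
def Rl {N : Type*} : List (Act N) → Multiset N
  | [] => 0
  | .rd a :: δ => Rl δ + {a}
  | .wt _ :: δ => Rl δ

/-- Atomic expressions. -/
inductive Expr (N : Type*) where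
  | done
  | retry
  | rd (a : N) (M : Expr N)
  | wt (a : N) (M : Expr N)
  | orElse (M₁ M₂ : Expr N)

/-- Ongoing atomic expressions. -/
inductive Ong (N : Type*) where
  | block (M : Expr N) (σ : Multiset N) (δ : List (Act N))
  | orElse (A B : Ong N)

/-- One-step reduction of ongoing expressions. -/
inductive Step {N : Type*} : Ong N → Ong N → Prop where
  | rdOk {a : N} {M σ δ} (h : Rl δ + {a} ≤ σ) :
      Step (.block (.rd a M) σ δ) (.block M σ (δ ++ [.rd a]))
  | rdFail {a : N} {M σ δ} (h : ¬ Rl δ + {a} ≤ σ) :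
      Step (.block (.rd a M) σ δ) (.block .retry σ δ)
  | wr {a : N} {M σ δ} :
      Step (.block (.wt a M) σ δ) (.block M σ (δ ++ [.wt a]))
  | orE {M₁ M₂ : Expr N} {σ δ} :
      Step (.block (.orElse M₁ M₂) σ δ) (.orElse (.block M₁ σ δ) (.block M₂ σ δ))
  | orFail {σ : Multiset N} {δ B} : Step (.orElse (.block .retry σ δ) B) B
  | orEnd {σ : Multiset N} {δ B} : Step (.orElse (.block .done σ δ) B) (.block .done σ δ)
  | congL {A A' B : Ong N} (h : Step A A') : Step (.orElse A B) (.orElse A' B)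
  | congR {A B B' : Ong N} (h : Step B B') : Step (.orElse A B) (.orElse A B')

/-- Multi-step reduction. -/
def Steps {N : Type*} : Ong N → Ong N → Prop := Relation.ReflTransGen Step

/-- Logs with the same effect on state σ. -/
def EffEq {N : Type*} [DecidableEq N] (σ : Multiset N) (δ δ' : List (Act N)) : Prop :=
  σ - Rl δ + Wl δ = σ - Rl δ' + Wl δ'

/-- Weak atomic equivalence. -/
def AEq {N : Type*} [DecidableEq N] (M M' : Expr N) : Prop :=
  ∀ σ : Multiset N,
    ((∃ δ, Steps (.block M σ []) (.block .retry σ δ)) ∧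
     (∃ δ', Steps (.block M' σ []) (.block .retry σ δ'))) ∨
    (∃ δ δ', Steps (.block M σ []) (.block .done σ δ) ∧
             Steps (.block M' σ []) (.block .done σ δ') ∧ EffEq σ δ δ')

/-- Prefixing an action onto an expression. -/
def pre {N : Type*} : Act N → Expr N → Expr N
  | .rd a, M => .rd a M
  | .wt a, M => .wt a M

/-- The pure sequence expression α₁.….αₙ.end. -/
def seq {N : Type*} (K : List (Act N)) : Expr N := K.foldr pre .done

/-- Right-nested orElse of a nonempty list of expressions. -/
def ors {N : Type*} : Expr N → List (Expr N) → Expr N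
  | M, [] => M
  | M, M' :: rest => .orElse M (ors M' rest)


lemma steps_congL {N : Type*} {A A' B : Ong N} (h : Steps A A') :
    Steps (.orElse A B) (.orElse A' B) :=
  Relation.ReflTransGen.lift (fun X => Ong.orElse X B) (fun _ _ h => Step.congL h) _ _ h

lemma outcome {N : Type*} [DecidableEq N] (M : Expr N) (σ : Multiset N) (δ : List (Act N)) :
    (∃ δ', Steps (.block M σ δ) (.block .retry σ δ')) ∨
    (∃ δ', Steps (.block M σ δ) (.block .done σ δ')) := by
  induction M generalizing δ with
  | done => exact Or.inr ⟨δ, Relation.ReflTransGen.refl⟩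
  | retry => exact Or.inl ⟨δ, Relation.ReflTransGen.refl⟩
  | rd a M ih =>
    by_cases h : Rl δ + {a} ≤ σ
    · rcases ih (δ ++ [.rd a]) with ⟨δ', hs⟩ | ⟨δ', hs⟩
      · exact Or.inl ⟨δ', Relation.ReflTransGen.head (Step.rdOk h) hs⟩
      · exact Or.inr ⟨δ', Relation.ReflTransGen.head (Step.rdOk h) hs⟩
    · exact Or.inl ⟨δ, Relation.ReflTransGen.single (Step.rdFail h)⟩
  | wt a M ih =>
    rcases ih (δ ++ [.wt a]) with ⟨δ', hs⟩ | ⟨δ', hs⟩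
    · exact Or.inl ⟨δ', Relation.ReflTransGen.head Step.wr hs⟩
    · exact Or.inr ⟨δ', Relation.ReflTransGen.head Step.wr hs⟩
  | orElse M₁ M₂ ih₁ ih₂ =>
    rcases ih₁ δ with ⟨δ₁, hs₁⟩ | ⟨δ₁, hs₁⟩
    · have h0 : Steps (.block (.orElse M₁ M₂) σ δ) (.block M₂ σ δ) :=
        Relation.ReflTransGen.head Step.orE
          ((steps_congL hs₁).tail Step.orFail)
      rcases ih₂ δ with ⟨δ₂, hs₂⟩ | ⟨δ₂, hs₂⟩
      · exact Or.inl ⟨δ₂, h0.trans hs₂⟩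
      · exact Or.inr ⟨δ₂, h0.trans hs₂⟩
    · exact Or.inr ⟨δ₁, Relation.ReflTransGen.head Step.orE
        ((steps_congL hs₁).tail Step.orEnd)⟩

/-- orElse is idempotent up to weak atomic equivalence: M orElse M ≈ M. -/
theorem stmt11 {N : Type*} [DecidableEq N] (M : Expr N) :
    AEq (.orElse M M) M := by
  intro σ
  rcases outcome M σ [] with ⟨δ, hs⟩ | ⟨δ, hs⟩
  · left
    refine ⟨⟨δ, ?_⟩, ⟨δ, hs⟩⟩
    exact Relation.ReflTransGen.head Step.orE
      (((steps_congL hs).tail Step.orFail).trans hs)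
  · right
    exact ⟨δ, δ, Relation.ReflTransGen.head Step.orE
      ((steps_congL hs).tail Step.orEnd), hs, rfl⟩
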